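/- Fix k ∈ ℕ and points x_1,…,x_n ∈ D with ρ_k(x_i) > 0. If the matrix G has full rank k, then the worst-case error of the weighted least-squares algorithm satisfies e(A_{n,k}, H)² ≤ a_k² + s_max(Γ)² / s_min(G)². -/

import Mathlib

open MeasureTheory Matrix

set_option maxHeartbeats 1000000
open MeasureTheory Matrix

private lemma summable_mul_of_sq {f g : ℕ → ℝ} (hf : Summable fun m => f m ^ 2)
    (hg : Summable fun m => g m ^ 2) : Summable fun m => f m * g m := by
  refine Summable.of_abs (Summable.of_nonneg_of_le (fun m => abs_nonneg _)
    (fun m => ?_) (((hf.add hg)).div_const 2))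
  have h2 := two_mul_le_add_sq |f m| |g m|
  rw [abs_mul]
  simp only [sq_abs] at h2
  nlinarith [abs_nonneg (f m), abs_nonneg (g m)]

private lemma tsum_mul_sq_le {f g : ℕ → ℝ} (hf : Summable fun m => f m ^ 2)
    (hg : Summable fun m => g m ^ 2) :
    (∑' m, f m * g m) ^ 2 ≤ (∑' m, f m ^ 2) * (∑' m, g m ^ 2) := by
  have hs := summable_mul_of_sq hf hg
  have ht : Filter.Tendsto (fun s : Finset ℕ => (∑ m ∈ s, f m * g m) ^ 2)
      Filter.atTop (nhds ((∑' m, f m * g m) ^ 2)) := hs.hasSum.pow 2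
  refine le_of_tendsto' ht fun s => ?_
  calc (∑ m ∈ s, f m * g m) ^ 2 ≤ (∑ m ∈ s, f m ^ 2) * ∑ m ∈ s, g m ^ 2 :=
        Finset.sum_mul_sq_le_sq_mul_sq s f g
    _ ≤ (∑' m, f m ^ 2) * (∑' m, g m ^ 2) := by
        apply mul_le_mul (Summable.sum_le_tsum s (fun m _ => sq_nonneg _) hf)
          (Summable.sum_le_tsum s (fun m _ => sq_nonneg _) hg)
          (Finset.sum_nonneg fun m _ => sq_nonneg _) (tsum_nonneg fun m => sq_nonneg _)

private lemma euclid_norm_sq {n : ℕ} (y : EuclideanSpace ℝ (Fin n)) :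
    ‖y‖ ^ 2 = ∑ i, y i ^ 2 := by
  rw [EuclideanSpace.norm_eq, Real.sq_sqrt (Finset.sum_nonneg fun i _ => sq_nonneg _)]
  simp [Real.norm_eq_abs, sq_abs]

private lemma orthonormal_norm_sum_sq {E : Type*} [NormedAddCommGroup E]
    [InnerProductSpace ℝ E] {ι : Type*} {v : ι → E} (hv : Orthonormal ℝ v)
    (s : Finset ι) (l : ι → ℝ) :
    ‖∑ i ∈ s, l i • v i‖ ^ 2 = ∑ i ∈ s, l i ^ 2 := by
  classical
  have : (inner ℝ (∑ i ∈ s, l i • v i) (∑ i ∈ s, l i • v i) : ℝ) = ∑ i ∈ s, l i ^ 2 := by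
    rw [sum_inner]
    have : ∀ i ∈ s, (inner ℝ (l i • v i) (∑ j ∈ s, l j • v j) : ℝ) = l i ^ 2 := by
      intro i hi
      rw [inner_smul_left, inner_sum]
      simp only [inner_smul_right]
      rw [Finset.sum_eq_single i]
      · rw [orthonormal_iff_ite.mp hv i i]; simp; ring
      · intro j hj hji
        rw [orthonormal_iff_ite.mp hv i j, if_neg (Ne.symm hji)]; ring
      · intro h; exact absurd hi h
    rw [Finset.sum_congr rfl this]
  rw [← real_inner_self_eq_norm_sq, this]

/-- Fix `k ≥ 1` (with `0 < Σ_{j≥k} a_j² < ∞`) and points `x_1,…,x_n ∈ D` with `ρ_k(x_i) > 0`.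
If `G = (ρ_k(x_i)^{-1/2} b_j(x_i))_{i≤n,j≤k}` has full rank `k`, then the worst-case error
of the weighted least-squares algorithm `A_{n,k}` (any minimizer over `V_k` of the weighted
sum of squares) satisfies `e(A_{n,k}, H)² ≤ a_k² + s_max(Γ)²/s_min(G)²`, i.e. for every
`f ∈ H` with `‖f‖_H ≤ 1`, `‖f − A_{n,k}(f)‖²_{L₂} ≤ a_k² + s_max(Γ)²/s_min(G)²`.
(Setting of the paper, with `B j = b_{j+1}`, `a j = ‖B j‖⁻¹`; the singular values are
expressed as `s_min(G) = inf {‖G v‖ : ‖v‖ = 1}` and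
`s_max(Γ) = sup {‖Γ v‖ : v ∈ ℓ₂, ‖v‖ = 1}`, where
`Γ = (ρ_k(x_i)^{-1/2} a_j b_{j+1}(x_i))_{i≤n, j≥k}`, columns indexed by `m ↔ j = k+m`.) -/
theorem stmt_5
    {D : Type} [MeasurableSpace D] (μ : Measure D)
    {H : Type} [NormedAddCommGroup H] [InnerProductSpace ℝ H] [CompleteSpace H]
    (ev : H →ₗ[ℝ] D → ℝ) (hev_inj : Function.Injective ev)
    (hev_cont : ∀ x : D, Continuous fun f : H => ev f x)
    (J : H →L[ℝ] Lp ℝ 2 μ) (hJ_inj : Function.Injective J)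
    (hJ_ae : ∀ f : H, (J f : D → ℝ) =ᵐ[μ] ev f)
    (W : H →L[ℝ] H) (hW_compact : IsCompactOperator W)
    (hW : ∀ f g : H, (inner ℝ (J f) (J g) : ℝ) = (inner ℝ (W f) g : ℝ))
    (B : ℕ → H) (hB_eig : ∀ j, ∃ lam : ℝ, W (B j) = lam • B j)
    (hB_orth : ∀ i j, i ≠ j → (inner ℝ (B i) (B j) : ℝ) = 0)
    (hB_total : (Submodule.span ℝ (Set.range B)).topologicalClosure = ⊤)
    (hB_L2 : Orthonormal ℝ fun j => J (B j))
    (hB_mono : Monotone fun j => ‖B j‖)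
    (a : ℕ → ℝ) (ha : ∀ j, a j = ‖B j‖⁻¹)
    (k : ℕ) (hk : 0 < k)
    (ha_sum : Summable fun j => a j ^ 2)
    (ha_tail_pos : 0 < ∑' j : ℕ, a (k + j) ^ 2)
    (ρ : D → ℝ) (hρ_meas : Measurable ρ)
    (hρ : ∀ x : D, ρ x = (1 / 2) *
      ((1 / (k : ℝ)) * ∑ j ∈ Finset.range k, (ev (B j) x) ^ 2 +
        (∑' j : ℕ, a (k + j) ^ 2)⁻¹ * ∑' j : ℕ, a (k + j) ^ 2 * (ev (B (k + j)) x) ^ 2))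
    (n : ℕ) (x : Fin n → D) (hx_pos : ∀ i, 0 < ρ (x i))
    (Vk : Submodule ℝ H)
    (hVk : Vk = Submodule.span ℝ (Set.range fun j : Fin k => B (j : ℕ)))
    (G : Matrix (Fin n) (Fin k) ℝ)
    (hG : ∀ i j, G i j = (Real.sqrt (ρ (x i)))⁻¹ * ev (B (j : ℕ)) (x i))
    (hG_rank : G.rank = k)
    (sminG : ℝ)
    (hsmin : sminG = sInf {r : ℝ | ∃ v : Fin k → ℝ,
      (∑ j, v j ^ 2) = 1 ∧ r = Real.sqrt (∑ i, (G.mulVec v i) ^ 2)})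
    (smaxΓ : ℝ)
    (hsmax : smaxΓ = sSup {r : ℝ | ∃ v : ℕ → ℝ, Summable (fun m => v m ^ 2) ∧
      (∑' m : ℕ, v m ^ 2) = 1 ∧
      r = Real.sqrt (∑ i : Fin n, (∑' m : ℕ,
        (Real.sqrt (ρ (x i)))⁻¹ * (a (k + m) * ev (B (k + m)) (x i)) * v m) ^ 2)}) :
    ∀ f : H, ‖f‖ ≤ 1 → ∀ Af : H, Af ∈ Vk →
      (∀ g ∈ Vk, (∑ i, (ev Af (x i) - ev f (x i)) ^ 2 / ρ (x i)) ≤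
        ∑ i, (ev g (x i) - ev f (x i)) ^ 2 / ρ (x i)) →
      ‖J f - J Af‖ ^ 2 ≤ a k ^ 2 + smaxΓ ^ 2 / sminG ^ 2 := by
  intro f hf Af hAf hmin

  -- positivity of norms
  have hBpos : ∀ j, 0 < ‖B j‖ := by
    intro j
    rcases eq_or_lt_of_le (norm_nonneg (B j)) with h0 | h
    · exfalso
      have hBe : B j = 0 := norm_eq_zero.mp h0.symm
      have h1 : ‖J (B j)‖ = 1 := hB_L2.1 j
      rw [hBe, map_zero, norm_zero] at h1
      exact zero_ne_one h1
    · exact h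
  have ha_pos : ∀ j, 0 < a j := fun j => by rw [ha]; exact inv_pos.mpr (hBpos j)
  -- the orthonormal system e
  set e : ℕ → H := fun j => ‖B j‖⁻¹ • B j with he_def
  have he_apply : ∀ j, e j = ‖B j‖⁻¹ • B j := fun j => rfl
  have he_on : Orthonormal ℝ e := by
    rw [orthonormal_iff_ite]
    intro i j
    by_cases hij : i = j
    · subst hij
      rw [if_pos rfl, he_apply, real_inner_smul_left, real_inner_smul_right,
        real_inner_self_eq_norm_mul_norm]
      field_simp
      rw [div_self (hBpos i).ne']
    · rw [if_neg hij]
      simp only [he_apply, real_inner_smul_left, real_inner_smul_right,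
        hB_orth i j hij, mul_zero]
  have he_sp : ⊤ ≤ (Submodule.span ℝ (Set.range e)).topologicalClosure := by
    rw [← hB_total]
    apply Submodule.topologicalClosure_mono
    rw [Submodule.span_le]
    rintro _ ⟨j, rfl⟩
    have hBj : B j = ‖B j‖ • e j := by
      rw [he_apply, smul_smul, mul_inv_cancel₀ (hBpos j).ne', one_smul]
    rw [hBj]
    exact Submodule.smul_mem _ _ (Submodule.subset_span ⟨j, rfl⟩)
  set b : HilbertBasis ℕ ℝ H := HilbertBasis.mk he_on he_sp with hb_eq
  have hb : ⇑b = e := by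
    rw [hb_eq]
    exact HilbertBasis.coe_mk he_on he_sp
  -- coefficients
  set c : ℕ → ℝ := fun j => b.repr f j with hc_def
  have hc_inner : ∀ j, c j = (inner ℝ (e j) f : ℝ) := by
    intro j
    rw [show c j = b.repr f j from rfl, b.repr_apply_apply, hb]
  have hcf : HasSum (fun j => c j • e j) f := by
    have key : (fun j => c j • e j) = (fun j => b.repr f j • b j) := by
      funext j
      exact congrArg (c j • ·) (congrFun hb j).symm
    rw [key]
    exact b.hasSum_repr f
  -- g and h
  set g : H := ∑ j ∈ Finset.range k, c j • e j with hg_def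
  set h : H := f - g with hh_def
  have hgVk : g ∈ Vk := by
    rw [hVk]
    apply Submodule.sum_mem
    intro j hj
    have hjk : j < k := Finset.mem_range.mp hj
    rw [he_apply]
    apply Submodule.smul_mem
    apply Submodule.smul_mem
    exact Submodule.subset_span ⟨⟨j, hjk⟩, rfl⟩
  have hh_sum : HasSum (fun m => c (k + m) • e (k + m)) h := by
    have h1 : HasSum (fun j => if j < k then c j • e j else (0 : H)) g := by
      have h1' := hasSum_sum_of_ne_finset_zero (s := Finset.range k) (L := SummationFilter.unconditional ℕ)
        (f := fun j => if j < k then c j • e j else (0 : H))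
        (by intro j hj
            have hjk : ¬ j < k := by simpa using hj
            simp [hjk])
      convert h1' using 1
      rw [hg_def]
      exact (Finset.sum_congr rfl fun j hj => by simp [Finset.mem_range.mp hj]).symm
    have h2 : HasSum (fun j => c j • e j - if j < k then c j • e j else (0 : H)) h :=
      hh_def ▸ hcf.sub h1
    have h3 := (Function.Injective.hasSum_iff (f := fun j =>
        c j • e j - if j < k then c j • e j else (0 : H))
        (add_right_injective k) ?_).mpr h2
    · have hfun : (fun m => c (k + m) • e (k + m)) = ((fun j =>
          c j • e j - if j < k then c j • e j else (0 : H)) ∘ fun m => k + m) := by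
        funext m
        simp only [Function.comp_apply]
        rw [if_neg (by omega), sub_zero]
      rw [hfun]
      exact h3
    · intro j hj
      have hjk : j < k := by
        by_contra hcon
        exact hj ⟨j - k, show k + (j - k) = j by omega⟩
      simp only [if_pos hjk, sub_self]
  -- evaluation functionals and Riesz representatives
  let L : D → (H →L[ℝ] ℝ) := fun y => ⟨(LinearMap.proj y).comp ev, hev_cont y⟩
  have hL : ∀ y u, L y u = ev u y := fun _ _ => rfl
  let R : Fin n → H := fun i => (InnerProductSpace.toDual ℝ H).symm (L (x i))
  have hR : ∀ i (u : H), (inner ℝ (R i) u : ℝ) = ev u (x i) := fun i u =>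
    InnerProductSpace.toDual_symm_apply
  -- the weighted sampling map
  let N : H →ₗ[ℝ] EuclideanSpace ℝ (Fin n) :=
    { toFun := fun u => (WithLp.toLp 2 (fun i => (Real.sqrt (ρ (x i)))⁻¹ * ev u (x i)) : EuclideanSpace ℝ (Fin n))
      map_add' := by
        intro u v
        ext i
        show (Real.sqrt (ρ (x i)))⁻¹ * ev (u + v) (x i) = _
        rw [map_add]
        show _ = (Real.sqrt (ρ (x i)))⁻¹ * ev u (x i) + (Real.sqrt (ρ (x i)))⁻¹ * ev v (x i)
        rw [Pi.add_apply]
        ring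
      map_smul' := by
        intro t u
        ext i
        show (Real.sqrt (ρ (x i)))⁻¹ * ev (t • u) (x i) = _
        rw [_root_.map_smul]
        show _ = t * ((Real.sqrt (ρ (x i)))⁻¹ * ev u (x i))
        rw [Pi.smul_apply, smul_eq_mul]
        ring }
  have hN_apply : ∀ (u : H) (i : Fin n), N u i = (Real.sqrt (ρ (x i)))⁻¹ * ev u (x i) :=
    fun _ _ => rfl
  have hNnormsq : ∀ u : H, ‖N u‖ ^ 2 = ∑ i, (ev u (x i)) ^ 2 / ρ (x i) := by
    intro u
    rw [euclid_norm_sq]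
    refine Finset.sum_congr rfl fun i _ => ?_
    rw [hN_apply, mul_pow, inv_pow, Real.sq_sqrt (hx_pos i).le, div_eq_mul_inv]
    ring
  have hmin' : ∀ g' ∈ Vk, ‖N Af - N f‖ ≤ ‖N g' - N f‖ := by
    intro g' hg'
    have h1 : ‖N Af - N f‖ ^ 2 ≤ ‖N g' - N f‖ ^ 2 := by
      rw [← map_sub, ← map_sub, hNnormsq, hNnormsq]
      have e1 : ∀ u : H, ∀ i, ev (u - f) (x i) = ev u (x i) - ev f (x i) := by
        intro u i
        rw [map_sub, Pi.sub_apply]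
      simp only [e1]
      exact hmin g' hg'
    have := Real.sqrt_le_sqrt h1
    rwa [Real.sqrt_sq (norm_nonneg _), Real.sqrt_sq (norm_nonneg _)] at this
  -- orthogonal projection geometry
  set S : Submodule ℝ (EuclideanSpace ℝ (Fin n)) := Vk.map N with hS_def
  haveI : FiniteDimensional ℝ S := FiniteDimensional.finiteDimensional_submodule S
  haveI : CompleteSpace S := FiniteDimensional.complete ℝ S
  set q : EuclideanSpace ℝ (Fin n) := N f with hq_def
  set Pq : EuclideanSpace ℝ (Fin n) := (S.orthogonalProjectionOnto q : EuclideanSpace ℝ (Fin n))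
    with hPq_def
  have hPq_mem : Pq ∈ S := (S.orthogonalProjectionOnto q).2
  have hNAf_mem : N Af ∈ S := Submodule.mem_map.mpr ⟨Af, hAf, rfl⟩
  have hNg_mem : N g ∈ S := Submodule.mem_map.mpr ⟨g, hgVk, rfl⟩
  have hperp : ∀ w ∈ S, (inner ℝ (q - Pq) w : ℝ) = 0 := fun w hw =>
    Submodule.starProjection_inner_eq_zero q w hw
  have hpyth : ∀ w ∈ S, ‖w - q‖ ^ 2 = ‖w - Pq‖ ^ 2 + ‖Pq - q‖ ^ 2 := by
    intro w hw
    have hd : (inner ℝ (w - Pq) (Pq - q) : ℝ) = 0 := by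
      have hp := hperp (w - Pq) (Submodule.sub_mem S hw hPq_mem)
      rw [real_inner_comm] at hp
      rw [← neg_sub q Pq, inner_neg_right, hp, neg_zero]
    have hsplit : w - q = (w - Pq) + (Pq - q) := by abel
    rw [hsplit]
    have := norm_add_sq_eq_norm_sq_add_norm_sq_of_inner_eq_zero (w - Pq) (Pq - q) hd
    rw [pow_two, pow_two, pow_two]
    exact this
  have key1 : N Af = Pq := by
    obtain ⟨g₀, hg₀Vk, hg₀⟩ := Submodule.mem_map.mp hPq_mem
    have h1 : ‖N Af - q‖ ≤ ‖Pq - q‖ := by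
      have := hmin' g₀ hg₀Vk
      rwa [hg₀] at this
    have h2 := hpyth (N Af) hNAf_mem
    have h1' : ‖N Af - q‖ ^ 2 ≤ ‖Pq - q‖ ^ 2 := pow_le_pow_left₀ (norm_nonneg _) h1 2
    have h3 : ‖N Af - Pq‖ ^ 2 ≤ 0 := by linarith
    have h4 : ‖N Af - Pq‖ ^ 2 = 0 := le_antisymm h3 (sq_nonneg _)
    have h5 : ‖N Af - Pq‖ = 0 := by
      exact (pow_eq_zero_iff (n := 2) (a := ‖N Af - Pq‖) (by norm_num)).mp h4
    exact sub_eq_zero.mp (norm_eq_zero.mp h5)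
  have key2 : ‖N g - N Af‖ ≤ ‖N h‖ := by
    have h2 := hpyth (N g) hNg_mem
    have h5 : ‖N g - q‖ = ‖N h‖ := by
      rw [hq_def, ← map_sub]
      have : g - f = -h := by rw [hh_def]; abel
      rw [this, map_neg, norm_neg]
    have h5' : ‖N g - q‖ ^ 2 = ‖N h‖ ^ 2 := by rw [h5]
    have h6 : ‖N g - Pq‖ ^ 2 ≤ ‖N h‖ ^ 2 := by
      have := sq_nonneg ‖Pq - q‖
      linarith
    rw [key1]
    have h7 := Real.sqrt_le_sqrt h6
    rwa [Real.sqrt_sq (norm_nonneg _), Real.sqrt_sq (norm_nonneg _)] at h7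
  -- injectivity of G
  have hGinj : Function.Injective G.mulVec := by
    have h1 := LinearMap.finrank_range_add_finrank_ker G.mulVecLin
    have h3 : Module.finrank ℝ (LinearMap.range G.mulVecLin) = k := hG_rank
    have h2 : Module.finrank ℝ (Fin k → ℝ) = k := by simp
    have h4 : Module.finrank ℝ (LinearMap.ker G.mulVecLin) = 0 := by omega
    have h5 : LinearMap.ker G.mulVecLin = ⊥ := Submodule.finrank_eq_zero.mp h4
    have h6 := LinearMap.ker_eq_bot.mp h5
    intro u v huv
    apply h6
    simpa [Matrix.mulVecLin_apply] using huv
  -- the sInf set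
  set sminSet : Set ℝ := {r : ℝ | ∃ v : Fin k → ℝ,
      (∑ j, v j ^ 2) = 1 ∧ r = Real.sqrt (∑ i, (G.mulVec v i) ^ 2)} with hsminSet_def
  have hsmin_bdd : BddBelow sminSet := by
    refine ⟨0, ?_⟩
    rintro r ⟨v, hv, rfl⟩
    exact Real.sqrt_nonneg _
  -- compactness argument for positivity
  set K : Set (Fin k → ℝ) := {v : Fin k → ℝ | (∑ j, v j ^ 2) = 1} with hK_def
  have hKcl : IsClosed K := by
    have : Continuous fun v : Fin k → ℝ => ∑ j, v j ^ 2 :=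
      continuous_finset_sum _ fun j _ => (continuous_apply j).pow 2
    exact isClosed_eq this continuous_const
  have hKsub : K ⊆ Metric.closedBall 0 1 := by
    intro v hv
    rw [Metric.mem_closedBall, dist_zero_right]
    rw [pi_norm_le_iff_of_nonneg zero_le_one]
    intro j
    have h1 : v j ^ 2 ≤ 1 := by
      rw [← hv]
      exact Finset.single_le_sum (f := fun j => v j ^ 2) (fun i _ => sq_nonneg _)
        (Finset.mem_univ j)
    have := Real.sqrt_le_sqrt h1
    rwa [Real.sqrt_sq_eq_abs, Real.sqrt_one] at this
  have hKcomp : IsCompact K := IsCompact.of_isClosed_subset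
    (isCompact_closedBall 0 1) hKcl hKsub
  set F : (Fin k → ℝ) → ℝ := fun v => Real.sqrt (∑ i, (G.mulVec v i) ^ 2) with hF_def
  have hFcont : Continuous F := by
    apply Real.continuous_sqrt.comp
    apply continuous_finset_sum
    intro i _
    apply Continuous.pow
    simp only [Matrix.mulVec, dotProduct]
    exact continuous_finset_sum _ fun j _ => continuous_const.mul (continuous_apply j)
  have hset_img : sminSet = F '' K := by
    ext r
    constructor
    · rintro ⟨v, hv, rfl⟩; exact ⟨v, hv, rfl⟩
    · rintro ⟨v, hv, rfl⟩; exact ⟨v, hv, rfl⟩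
  have hKne : K.Nonempty := by
    refine ⟨Pi.single (⟨0, hk⟩ : Fin k) (1:ℝ), ?_⟩
    simp only [hK_def, Set.mem_setOf_eq]
    rw [Finset.sum_eq_single (⟨0, hk⟩ : Fin k)]
    · simp
    · intro j _ hj
      rw [Pi.single_apply, if_neg hj]
      ring
    · intro habs
      exact absurd (Finset.mem_univ _) habs
  have hsmin_mem : sminG ∈ F '' K := by
    rw [hsmin, hset_img]
    exact (hKcomp.image hFcont).sInf_mem (hKne.image F)
  have hsmin_pos : 0 < sminG := by
    obtain ⟨v₁, hv₁K, hv₁⟩ := hsmin_mem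
    rw [← hv₁, hF_def]
    apply Real.sqrt_pos.mpr
    have hv₁ne : v₁ ≠ 0 := by
      intro hzero
      rw [hK_def] at hv₁K
      simp only [Set.mem_setOf_eq, hzero] at hv₁K
      simp at hv₁K
    have hGv : G.mulVec v₁ ≠ 0 := by
      intro hzero
      exact hv₁ne (hGinj (by rw [hzero, Matrix.mulVec_zero]))
    obtain ⟨i, hi⟩ := Function.ne_iff.mp hGv
    apply Finset.sum_pos' (fun i _ => sq_nonneg _)
    exact ⟨i, Finset.mem_univ i, lt_of_le_of_ne (sq_nonneg _) (Ne.symm (pow_ne_zero 2 hi))⟩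
  have hGlow : ∀ u : Fin k → ℝ, sminG ^ 2 * (∑ j, u j ^ 2) ≤ ∑ i, (G.mulVec u i) ^ 2 := by
    intro u
    rcases eq_or_ne u 0 with rfl | hu
    · simp [Matrix.mulVec_zero]
    · have hsum_pos : 0 < ∑ j, u j ^ 2 := by
        obtain ⟨j, hj⟩ := Function.ne_iff.mp hu
        apply Finset.sum_pos' (fun i _ => sq_nonneg _)
        exact ⟨j, Finset.mem_univ j, lt_of_le_of_ne (sq_nonneg _) (Ne.symm (pow_ne_zero 2 hj))⟩
      set s : ℝ := Real.sqrt (∑ j, u j ^ 2) with hs_def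
      have hspos : 0 < s := Real.sqrt_pos.mpr hsum_pos
      have hs_sq : s ^ 2 = ∑ j, u j ^ 2 := Real.sq_sqrt hsum_pos.le
      have hv1 : (∑ j, (s⁻¹ • u) j ^ 2) = 1 := by
        simp only [Pi.smul_apply, smul_eq_mul, mul_pow, ← Finset.mul_sum]
        rw [← hs_sq]
        field_simp
      have hmem : Real.sqrt (∑ i, (G.mulVec (s⁻¹ • u) i) ^ 2) ∈ sminSet := ⟨s⁻¹ • u, hv1, rfl⟩
      have h1 : sminG ≤ Real.sqrt (∑ i, (G.mulVec (s⁻¹ • u) i) ^ 2) := by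
        rw [hsmin]
        exact csInf_le hsmin_bdd hmem
      have h2 : sminG ^ 2 ≤ ∑ i, (G.mulVec (s⁻¹ • u) i) ^ 2 := by
        have := pow_le_pow_left₀ hsmin_pos.le h1 2
        rwa [Real.sq_sqrt (Finset.sum_nonneg fun i _ => sq_nonneg _)] at this
      have h3 : (∑ i, (G.mulVec (s⁻¹ • u) i) ^ 2) = s⁻¹ ^ 2 * ∑ i, (G.mulVec u i) ^ 2 := by
        rw [Matrix.mulVec_smul]
        simp only [Pi.smul_apply, smul_eq_mul, mul_pow, ← Finset.mul_sum]
      rw [h3] at h2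
      have h4 : sminG ^ 2 * s ^ 2 ≤ s ^ 2 * (s⁻¹ ^ 2 * ∑ i, (G.mulVec u i) ^ 2) := by
        calc sminG ^ 2 * s ^ 2 = s ^ 2 * sminG ^ 2 := by ring
        _ ≤ s ^ 2 * (s⁻¹ ^ 2 * ∑ i, (G.mulVec u i) ^ 2) := by
            apply mul_le_mul_of_nonneg_left h2 (sq_nonneg s)
      have h5 : s ^ 2 * (s⁻¹ ^ 2 * ∑ i, (G.mulVec u i) ^ 2) = ∑ i, (G.mulVec u i) ^ 2 := by
        field_simp
      rw [h5, hs_sq] at h4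
      exact h4
  -- the Γ side
  set smaxSet : Set ℝ := {r : ℝ | ∃ v : ℕ → ℝ, Summable (fun m => v m ^ 2) ∧
      (∑' m : ℕ, v m ^ 2) = 1 ∧
      r = Real.sqrt (∑ i : Fin n, (∑' m : ℕ,
        (Real.sqrt (ρ (x i)))⁻¹ * (a (k + m) * ev (B (k + m)) (x i)) * v m) ^ 2)}
    with hsmaxSet_def
  have hev_smul : ∀ (t : ℝ) (u : H) y, ev (t • u) y = t * ev u y := by
    intro t u y
    rw [_root_.map_smul]
    rfl
  have hev_e : ∀ j y, ev (e j) y = a j * ev (B j) y := by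
    intro j y
    rw [he_apply, hev_smul, ha]
  have he_on' : Orthonormal ℝ fun m => e (k + m) := he_on.comp _ (add_right_injective k)
  have hΓsq : ∀ i, Summable fun m =>
      ((Real.sqrt (ρ (x i)))⁻¹ * (a (k + m) * ev (B (k + m)) (x i))) ^ 2 := by
    intro i
    have h1 := Orthonormal.inner_products_summable (R i) he_on'
    have h2 : ∀ m, ((Real.sqrt (ρ (x i)))⁻¹) ^ 2 * ‖(inner ℝ ((fun m => e (k + m)) m) (R i) : ℝ)‖ ^ 2
        = ((Real.sqrt (ρ (x i)))⁻¹ * (a (k + m) * ev (B (k + m)) (x i))) ^ 2 := by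
      intro m
      have h3 : (inner ℝ (e (k + m)) (R i) : ℝ) = a (k + m) * ev (B (k + m)) (x i) := by
        rw [real_inner_comm, hR, hev_e]
      simp only [h3, Real.norm_eq_abs, sq_abs, mul_pow]
    refine (h1.mul_left (((Real.sqrt (ρ (x i)))⁻¹) ^ 2)).congr ?_
    intro m
    exact h2 m
  have hsmax_bdd : BddAbove smaxSet := by
    refine ⟨Real.sqrt (∑ i, ∑' m,
      ((Real.sqrt (ρ (x i)))⁻¹ * (a (k + m) * ev (B (k + m)) (x i))) ^ 2), ?_⟩
    rintro r ⟨v, hv_sum, hv1, rfl⟩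
    apply Real.sqrt_le_sqrt
    apply Finset.sum_le_sum
    intro i _
    have h1 := tsum_mul_sq_le (hΓsq i) hv_sum
    rw [hv1, mul_one] at h1
    exact h1
  have hone_mem : Real.sqrt (∑ i : Fin n, (∑' m : ℕ,
      (Real.sqrt (ρ (x i)))⁻¹ * (a (k + m) * ev (B (k + m)) (x i)) *
        (if m = 0 then (1:ℝ) else 0)) ^ 2) ∈ smaxSet := by
    refine ⟨fun m => if m = 0 then 1 else 0, ?_, ?_, rfl⟩
    · apply summable_of_ne_finset_zero (s := ({0} : Finset ℕ))
      intro m hm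
      have hm0 : m ≠ 0 := by simpa using hm
      simp [hm0]
    · rw [tsum_eq_single 0]
      · norm_num
      · intro m hm
        simp [hm]
  have hsmax_nonneg : 0 ≤ smaxΓ := by
    have h1 := le_csSup hsmax_bdd hone_mem
    rw [← hsmax] at h1
    exact le_trans (Real.sqrt_nonneg _) h1
  have hw_sum : Summable fun m => c (k + m) ^ 2 := by
    have h1 := Orthonormal.inner_products_summable f he_on'
    have h2 : ∀ m, ‖(inner ℝ ((fun m => e (k + m)) m) f : ℝ)‖ ^ 2 = c (k + m) ^ 2 := by
      intro m
      rw [show (inner ℝ ((fun m => e (k + m)) m) f : ℝ) = inner ℝ (e (k + m)) f from rfl,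
        ← hc_inner, Real.norm_eq_abs, sq_abs]
    simpa only [h2] using h1
  have hw_le1 : (∑' m, c (k + m) ^ 2) ≤ 1 := by
    have h1 := Orthonormal.tsum_inner_products_le f he_on'
    have h2 : ∀ m, ‖(inner ℝ ((fun m => e (k + m)) m) f : ℝ)‖ ^ 2 = c (k + m) ^ 2 := by
      intro m
      rw [show (inner ℝ ((fun m => e (k + m)) m) f : ℝ) = inner ℝ (e (k + m)) f from rfl,
        ← hc_inner, Real.norm_eq_abs, sq_abs]
    rw [tsum_congr h2] at h1
    have h3 : ‖f‖ ^ 2 ≤ 1 := by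
      have := pow_le_one₀ (norm_nonneg f) hf (n := 2)
      simpa using this
    linarith
  have hT_hasSum : ∀ i, HasSum (fun m =>
      (Real.sqrt (ρ (x i)))⁻¹ * (a (k + m) * ev (B (k + m)) (x i)) * c (k + m))
      ((Real.sqrt (ρ (x i)))⁻¹ * ev h (x i)) := by
    intro i
    have h1 := (hh_sum.mapL (L (x i))).mul_left ((Real.sqrt (ρ (x i)))⁻¹)
    have h4 : (fun m => (Real.sqrt (ρ (x i)))⁻¹ * (a (k + m) * ev (B (k + m)) (x i)) * c (k + m))
        = fun m => (Real.sqrt (ρ (x i)))⁻¹ * (L (x i) (c (k + m) • e (k + m))) := by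
      funext m
      rw [show L (x i) (c (k + m) • e (k + m)) = c (k + m) * ev (e (k + m)) (x i) from by
        rw [_root_.map_smul]; rfl]
      rw [hev_e]
      ring
    rw [h4]
    exact h1
  have hNh_le : Real.sqrt (∑ i, ((Real.sqrt (ρ (x i)))⁻¹ * ev h (x i)) ^ 2) ≤ smaxΓ := by
    rcases eq_or_ne (∑' m, c (k + m) ^ 2) 0 with hzero | hnz
    · have hwm : ∀ m, c (k + m) = 0 := by
        intro m
        have h1 : c (k + m) ^ 2 ≤ ∑' m, c (k + m) ^ 2 :=
          Summable.le_tsum hw_sum m (fun m' _ => sq_nonneg _)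
        rw [hzero] at h1
        have h2 : c (k + m) ^ 2 = 0 := le_antisymm h1 (sq_nonneg _)
        exact pow_eq_zero_iff (n := 2) (by norm_num) |>.mp h2
      have hTzero : ∀ i : Fin n, (Real.sqrt (ρ (x i)))⁻¹ * ev h (x i) = 0 := by
        intro i
        have h1 := hT_hasSum i
        have h2 : (fun m => (Real.sqrt (ρ (x i)))⁻¹ * (a (k + m) * ev (B (k + m)) (x i)) *
            c (k + m)) = fun _ => (0:ℝ) := by
          funext m
          rw [hwm m]
          ring
        rw [h2] at h1
        exact (h1.unique hasSum_zero).symm ▸ rfl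
      have h3 : (∑ i, ((Real.sqrt (ρ (x i)))⁻¹ * ev h (x i)) ^ 2) = 0 :=
        Finset.sum_eq_zero fun i _ => by rw [hTzero i]; ring
      rw [h3, Real.sqrt_zero]
      exact hsmax_nonneg
    · have hpos : 0 < ∑' m, c (k + m) ^ 2 :=
        lt_of_le_of_ne (tsum_nonneg fun m => sq_nonneg _) (Ne.symm hnz)
      set s : ℝ := Real.sqrt (∑' m, c (k + m) ^ 2) with hs_def
      have hspos : 0 < s := Real.sqrt_pos.mpr hpos
      have hs_le1 : s ≤ 1 := by
        rw [hs_def]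
        calc Real.sqrt (∑' m, c (k + m) ^ 2) ≤ Real.sqrt 1 := Real.sqrt_le_sqrt hw_le1
          _ = 1 := Real.sqrt_one
      have hssq : s ^ 2 = ∑' m, c (k + m) ^ 2 := Real.sq_sqrt hpos.le
      have hv_sum : Summable fun m => (s⁻¹ * c (k + m)) ^ 2 := by
        simpa only [mul_pow] using hw_sum.mul_left (s⁻¹ ^ 2)
      have hv1 : (∑' m, (s⁻¹ * c (k + m)) ^ 2) = 1 := by
        simp only [mul_pow]
        rw [tsum_mul_left, ← hssq]
        field_simp
      have hTi : ∀ i, HasSum (fun m => (Real.sqrt (ρ (x i)))⁻¹ *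
          (a (k + m) * ev (B (k + m)) (x i)) * (s⁻¹ * c (k + m)))
          (s⁻¹ * ((Real.sqrt (ρ (x i)))⁻¹ * ev h (x i))) := by
        intro i
        have h1 := (hT_hasSum i).mul_left s⁻¹
        have harr : (fun m => (Real.sqrt (ρ (x i)))⁻¹ *
            (a (k + m) * ev (B (k + m)) (x i)) * (s⁻¹ * c (k + m)))
            = fun m => s⁻¹ * ((Real.sqrt (ρ (x i)))⁻¹ *
              (a (k + m) * ev (B (k + m)) (x i)) * c (k + m)) := by
          funext m
          ring
        rw [harr]
        exact h1
      have hmem : Real.sqrt (∑ i : Fin n, (∑' m : ℕ,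
          (Real.sqrt (ρ (x i)))⁻¹ * (a (k + m) * ev (B (k + m)) (x i)) *
            (s⁻¹ * c (k + m))) ^ 2) ∈ smaxSet :=
        ⟨fun m => s⁻¹ * c (k + m), hv_sum, hv1, rfl⟩
      have h2 := le_csSup hsmax_bdd hmem
      rw [← hsmax] at h2
      have h4 : (∑ i : Fin n, (∑' m : ℕ,
          (Real.sqrt (ρ (x i)))⁻¹ * (a (k + m) * ev (B (k + m)) (x i)) *
            (s⁻¹ * c (k + m))) ^ 2)
          = s⁻¹ ^ 2 * ∑ i, ((Real.sqrt (ρ (x i)))⁻¹ * ev h (x i)) ^ 2 := by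
        rw [Finset.mul_sum]
        refine Finset.sum_congr rfl fun i _ => ?_
        rw [(hTi i).tsum_eq, mul_pow]
      rw [h4, Real.sqrt_mul (sq_nonneg _), Real.sqrt_sq (inv_nonneg.mpr hspos.le)] at h2
      have h6 : Real.sqrt (∑ i, ((Real.sqrt (ρ (x i)))⁻¹ * ev h (x i)) ^ 2) ≤ s * smaxΓ := by
        have h7 := mul_le_mul_of_nonneg_left h2 hspos.le
        rwa [← mul_assoc, mul_inv_cancel₀ hspos.ne', one_mul] at h7
      calc Real.sqrt (∑ i, ((Real.sqrt (ρ (x i)))⁻¹ * ev h (x i)) ^ 2) ≤ s * smaxΓ := h6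
        _ ≤ 1 * smaxΓ := mul_le_mul_of_nonneg_right hs_le1 hsmax_nonneg
        _ = smaxΓ := one_mul _
  -- bound on ‖J h‖
  have hak_mono : ∀ m, a (k + m) ≤ a k := by
    intro m
    rw [ha, ha]
    exact inv_anti₀ (hBpos k) (hB_mono (Nat.le_add_right k m))
  have hJB' : Orthonormal ℝ fun m => J (B (k + m)) := hB_L2.comp _ (add_right_injective k)
  have hJh_sum2 : HasSum (fun m => (c (k + m) * a (k + m)) • J (B (k + m))) (J h) := by
    have h1 := hh_sum.mapL J
    have h2 : (fun m => J (c (k + m) • e (k + m)))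
        = fun m => (c (k + m) * a (k + m)) • J (B (k + m)) := by
      funext m
      rw [_root_.map_smul, he_apply, _root_.map_smul, ← ha, smul_smul]
    rw [← h2]
    exact h1
  have hcsq : ∀ m, ‖(inner ℝ ((fun m => e (k + m)) m) f : ℝ)‖ ^ 2 = c (k + m) ^ 2 := by
    intro m
    rw [show (inner ℝ ((fun m => e (k + m)) m) f : ℝ) = inner ℝ (e (k + m)) f from rfl,
      ← hc_inner, Real.norm_eq_abs, sq_abs]
  have hf_sq : ‖f‖ ^ 2 ≤ 1 := by
    have := pow_le_one₀ (norm_nonneg f) hf (n := 2)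
    simpa using this
  have hJh_bound : ‖J h‖ ≤ a k := by
    have hten : Filter.Tendsto (fun s : Finset ℕ =>
        ‖∑ m ∈ s, (c (k + m) * a (k + m)) • J (B (k + m))‖) Filter.atTop (nhds ‖J h‖) :=
      (continuous_norm.tendsto (J h)).comp hJh_sum2
    refine le_of_tendsto' hten fun s => ?_
    have h1 : ‖∑ m ∈ s, (c (k + m) * a (k + m)) • J (B (k + m))‖ ^ 2
        = ∑ m ∈ s, (c (k + m) * a (k + m)) ^ 2 :=
      orthonormal_norm_sum_sq hJB' s _
    have h2 : ∑ m ∈ s, (c (k + m) * a (k + m)) ^ 2 ≤ a k ^ 2 * ∑ m ∈ s, c (k + m) ^ 2 := by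
      rw [Finset.mul_sum]
      refine Finset.sum_le_sum fun m _ => ?_
      have h3 : a (k + m) ^ 2 ≤ a k ^ 2 := pow_le_pow_left₀ (ha_pos (k + m)).le (hak_mono m) 2
      calc (c (k + m) * a (k + m)) ^ 2 = c (k + m) ^ 2 * a (k + m) ^ 2 := by ring
        _ ≤ c (k + m) ^ 2 * a k ^ 2 := mul_le_mul_of_nonneg_left h3 (sq_nonneg _)
        _ = a k ^ 2 * c (k + m) ^ 2 := by ring
    have h3 : ∑ m ∈ s, c (k + m) ^ 2 ≤ 1 := by
      have h4 := Orthonormal.sum_inner_products_le (s := s) f he_on'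
      rw [Finset.sum_congr rfl fun m _ => hcsq m] at h4
      linarith
    have h6 : ‖∑ m ∈ s, (c (k + m) * a (k + m)) • J (B (k + m))‖ ^ 2 ≤ a k ^ 2 := by
      rw [h1]
      calc ∑ m ∈ s, (c (k + m) * a (k + m)) ^ 2 ≤ a k ^ 2 * ∑ m ∈ s, c (k + m) ^ 2 := h2
        _ ≤ a k ^ 2 * 1 := mul_le_mul_of_nonneg_left h3 (sq_nonneg _)
        _ = a k ^ 2 := mul_one _
    have h7 := Real.sqrt_le_sqrt h6
    rwa [Real.sqrt_sq (norm_nonneg _), Real.sqrt_sq (ha_pos k).le] at h7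
  -- representation of g - Af
  have hgAf_mem : g - Af ∈ Vk := Submodule.sub_mem _ hgVk hAf
  rw [hVk] at hgAf_mem
  obtain ⟨u, hu⟩ := (Submodule.mem_span_range_iff_exists_fun ℝ).mp hgAf_mem
  have hev_gAf : ∀ i, ev (g - Af) (x i) = ∑ j : Fin k, u j * ev (B (j : ℕ)) (x i) := by
    intro i
    rw [← hu]
    rw [show ev (∑ j : Fin k, u j • B (j : ℕ)) (x i)
      = L (x i) (∑ j : Fin k, u j • B (j : ℕ)) from rfl]
    rw [map_sum]
    refine Finset.sum_congr rfl fun j _ => ?_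
    rw [_root_.map_smul]
    rfl
  have hGmul : ∀ i, G.mulVec u i = (Real.sqrt (ρ (x i)))⁻¹ * ev (g - Af) (x i) := by
    intro i
    rw [hev_gAf]
    simp only [Matrix.mulVec, dotProduct]
    rw [Finset.mul_sum]
    refine Finset.sum_congr rfl fun j _ => ?_
    rw [hG i j]
    ring
  have hJGfin : J (g - Af) = ∑ j : Fin k, u j • J (B (j : ℕ)) := by
    rw [← hu, map_sum]
    refine Finset.sum_congr rfl fun j _ => ?_
    rw [_root_.map_smul]
  have hJgAf_sq : ‖J (g - Af)‖ ^ 2 = ∑ j : Fin k, u j ^ 2 := by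
    have hJfin : Orthonormal ℝ fun j : Fin k => J (B (j : ℕ)) :=
      hB_L2.comp (fun j : Fin k => (j : ℕ)) Fin.val_injective
    rw [hJGfin]
    exact orthonormal_norm_sum_sq hJfin Finset.univ u
  have hchain : ‖J (g - Af)‖ ^ 2 ≤ smaxΓ ^ 2 / sminG ^ 2 := by
    have h1 := hGlow u
    have h2 : (∑ i, (G.mulVec u i) ^ 2) = ‖N (g - Af)‖ ^ 2 := by
      rw [euclid_norm_sq]
      refine Finset.sum_congr rfl fun i _ => ?_
      rw [hGmul i, hN_apply]
    have h3 : ‖N (g - Af)‖ = ‖N g - N Af‖ := by rw [map_sub]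
    have h4 : ‖N h‖ ^ 2 = ∑ i, ((Real.sqrt (ρ (x i)))⁻¹ * ev h (x i)) ^ 2 := by
      rw [euclid_norm_sq]
      refine Finset.sum_congr rfl fun i _ => ?_
      rw [hN_apply]
    have h5 : ‖N h‖ ≤ smaxΓ := by
      have h5' := hNh_le
      rw [← h4] at h5'
      rwa [Real.sqrt_sq (norm_nonneg _)] at h5'
    have h6 : ‖N g - N Af‖ ≤ smaxΓ := le_trans key2 h5
    have h7 : ‖N (g - Af)‖ ^ 2 ≤ smaxΓ ^ 2 := by
      rw [h3]
      exact pow_le_pow_left₀ (norm_nonneg _) h6 2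
    have h8 : sminG ^ 2 * ∑ j, u j ^ 2 ≤ smaxΓ ^ 2 := by
      rw [h2] at h1
      exact le_trans h1 h7
    rw [hJgAf_sq]
    rw [le_div_iff₀ (pow_pos hsmin_pos 2)]
    linarith
  -- cross term vanishes
  have hcross : (inner ℝ (J h) (J (g - Af)) : ℝ) = 0 := by
    rw [hJGfin, inner_sum]
    refine Finset.sum_eq_zero fun j _ => ?_
    rw [real_inner_smul_right]
    suffices hsuf : (inner ℝ (J h) (J (B (j : ℕ))) : ℝ) = 0 by rw [hsuf]; ring
    rw [real_inner_comm, hW (B (j : ℕ)) h]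
    obtain ⟨lam, hlam⟩ := hB_eig (j : ℕ)
    rw [hlam, real_inner_smul_left]
    have hBe : (inner ℝ (B (j : ℕ)) h : ℝ) = 0 := by
      have h2 : (inner ℝ (e (j : ℕ)) h : ℝ) = 0 := by
        rw [hh_def, inner_sub_right]
        have h3 : (inner ℝ (e (j : ℕ)) g : ℝ) = c (j : ℕ) := by
          rw [hg_def, inner_sum]
          rw [Finset.sum_eq_single (j : ℕ)]
          · rw [real_inner_smul_right, orthonormal_iff_ite.mp he_on, if_pos rfl, mul_one]
          · intro i hi hij
            rw [real_inner_smul_right, orthonormal_iff_ite.mp he_on, if_neg (Ne.symm hij),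
              mul_zero]
          · intro habs
            exact absurd (Finset.mem_range.mpr j.isLt) habs
        rw [h3, ← hc_inner, sub_self]
      have h4 : B (j : ℕ) = ‖B (j : ℕ)‖ • e (j : ℕ) := by
        rw [he_apply, smul_smul, mul_inv_cancel₀ (hBpos _).ne', one_smul]
      rw [h4, real_inner_smul_left, h2, mul_zero]
    rw [hBe, mul_zero]
  -- assemble
  have hsplit : J f - J Af = J h + J (g - Af) := by
    have h1 : f - Af = h + (g - Af) := by rw [hh_def]; abel
    rw [← map_sub, h1, map_add]
  have hfinal : ‖J f - J Af‖ ^ 2 = ‖J h‖ ^ 2 + ‖J (g - Af)‖ ^ 2 := by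
    rw [hsplit]
    have h2 := norm_add_sq_eq_norm_sq_add_norm_sq_of_inner_eq_zero (J h) (J (g - Af)) hcross
    rw [pow_two, pow_two, pow_two]
    exact h2
  rw [hfinal]
  have hJh2 : ‖J h‖ ^ 2 ≤ a k ^ 2 := pow_le_pow_left₀ (norm_nonneg _) hJh_bound 2
  linarith
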